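/- Let F be a finite family of subsets of a set X and Q a finite nonempty subset of X such that for every pair of distinct points p, q ∈ Q, some member of F contains exactly one of p and q. Then there exists a subfamily F' ⊆ F with |F'| ≤ |Q| − 1 such that for every pair of distinct points p, q ∈ Q, some member of F' contains exactly one of p and q. -/
import Mathlib


theorem stmt11 {X : Type*} (F : Finset (Set X)) (Q : Finset X) (hQ : Q.Nonempty)
    (hsep : ∀ p ∈ Q, ∀ q ∈ Q, p ≠ q → ∃ A ∈ F, Xor' (p ∈ A) (q ∈ A)) :
    ∃ F' ⊆ F, F'.card ≤ Q.card - 1 ∧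
      ∀ p ∈ Q, ∀ q ∈ Q, p ≠ q → ∃ A ∈ F', Xor' (p ∈ A) (q ∈ A) := by
  classical
  revert hQ hsep
  induction Q using Finset.strongInduction with
  | _ Q ih =>
    intro hQ hsep
    by_cases hc : Q.card ≤ 1
    · refine ⟨∅, Finset.empty_subset _, by simp, ?_⟩
      intro p hp q hq hpq
      exact absurd (Finset.card_le_one.mp hc p hp q hq) hpq
    · push_neg at hc
      obtain ⟨p, hp, q, hq, hpq⟩ := Finset.one_lt_card.mp hc
      obtain ⟨A, hA, hxor⟩ := hsep p hp q hq hpq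
      set Q1 := Q.filter (· ∈ A) with hQ1def
      set Q2 := Q.filter (· ∉ A) with hQ2def
      have hn1 : Q1.Nonempty := by
        rcases hxor with ⟨h1, _⟩ | ⟨h1, h2⟩
        · exact ⟨p, Finset.mem_filter.mpr ⟨hp, h1⟩⟩
        · exact ⟨q, Finset.mem_filter.mpr ⟨hq, h1⟩⟩
      have hn2 : Q2.Nonempty := by
        rcases hxor with ⟨h1, h2⟩ | ⟨_, h2⟩
        · exact ⟨q, Finset.mem_filter.mpr ⟨hq, h2⟩⟩
        · exact ⟨p, Finset.mem_filter.mpr ⟨hp, h2⟩⟩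
      have hss1 : Q1 ⊂ Q := by
        refine ⟨Finset.filter_subset _ _, fun h => ?_⟩
        obtain ⟨x, hx⟩ := hn2
        have := Finset.mem_filter.mp hx
        have := Finset.mem_filter.mp (h this.1)
        exact (Finset.mem_filter.mp hx).2 this.2
      have hss2 : Q2 ⊂ Q := by
        refine ⟨Finset.filter_subset _ _, fun h => ?_⟩
        obtain ⟨x, hx⟩ := hn1
        have hx' := Finset.mem_filter.mp hx
        have := Finset.mem_filter.mp (h hx'.1)
        exact this.2 hx'.2
      obtain ⟨F1, hF1sub, hF1card, hF1sep⟩ := ih Q1 hss1 hn1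
        (fun a ha b hb hab => hsep a (Finset.mem_filter.mp ha).1 b (Finset.mem_filter.mp hb).1 hab)
      obtain ⟨F2, hF2sub, hF2card, hF2sep⟩ := ih Q2 hss2 hn2
        (fun a ha b hb hab => hsep a (Finset.mem_filter.mp ha).1 b (Finset.mem_filter.mp hb).1 hab)
      refine ⟨insert A (F1 ∪ F2), ?_, ?_, ?_⟩
      · intro B hB
        rcases Finset.mem_insert.mp hB with rfl | hB
        · exact hA
        · rcases Finset.mem_union.mp hB with h | h
          · exact hF1sub h
          · exact hF2sub h
      · have hsum : Q1.card + Q2.card = Q.card := Finset.card_filter_add_card_filter_not _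
        have h1 : 1 ≤ Q1.card := Finset.card_pos.mpr hn1
        have h2 : 1 ≤ Q2.card := Finset.card_pos.mpr hn2
        calc (insert A (F1 ∪ F2)).card ≤ (F1 ∪ F2).card + 1 := Finset.card_insert_le _ _
          _ ≤ F1.card + F2.card + 1 := by
              have := Finset.card_union_le F1 F2; omega
          _ ≤ (Q1.card - 1) + (Q2.card - 1) + 1 := by omega
          _ ≤ Q.card - 1 := by omega
      · intro a ha b hb hab
        by_cases haA : a ∈ A <;> by_cases hbA : b ∈ A
        · obtain ⟨B, hB, hBx⟩ := hF1sep a (Finset.mem_filter.mpr ⟨ha, haA⟩)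
            b (Finset.mem_filter.mpr ⟨hb, hbA⟩) hab
          exact ⟨B, Finset.mem_insert.mpr (Or.inr (Finset.mem_union_left _ hB)), hBx⟩
        · exact ⟨A, Finset.mem_insert_self _ _, Or.inl ⟨haA, hbA⟩⟩
        · exact ⟨A, Finset.mem_insert_self _ _, Or.inr ⟨hbA, haA⟩⟩
        · obtain ⟨B, hB, hBx⟩ := hF2sep a (Finset.mem_filter.mpr ⟨ha, haA⟩)
            b (Finset.mem_filter.mpr ⟨hb, hbA⟩) hab
          exact ⟨B, Finset.mem_insert.mpr (Or.inr (Finset.mem_union_right _ hB)), hBx⟩
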